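/- In the graph G of the previous construction (k ≥ 2 even; bipartition (X₁ ∪ X₂ ∪ {u}, Y₁ ∪ Y₂ ∪ {v}); K_{k,k} on X₁ ∪ Y₁ and on X₂ ∪ Y₂; u adjacent to Y₁ ∪ {v}; v adjacent to X₂ ∪ {u}; a perfect matching between X₁ and Y₂), G does not contain k vertex-disjoint cycles of which k − 1 have length 4 and one has length 6 spanning all 4k + 2 vertices. Consequently, G does not contain a spanning subgraph that is a disjoint union of k − 1 cycles of length 4 and one cycle of length 6. -/

import Mathlib

open SimpleGraph Walk Finset

private lemma aux_walk4 {V : Type*} {G : SimpleGraph V} {x : V} (p : G.Walk x x)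
    (h : p.length = 4) :
    ∃ b c d, G.Adj x b ∧ G.Adj b c ∧ G.Adj c d ∧ G.Adj d x ∧ p.support = [x, b, c, d, x] := by
  cases p with
  | nil => simp at h
  | cons h1 q => cases q with
    | nil => simp at h
    | cons h2 q => cases q with
      | nil => simp at h
      | cons h3 q => cases q with
        | nil => simp at h
        | cons h4 q => cases q with
          | nil => exact ⟨_, _, _, h1, h2, h3, h4, by simp⟩
          | cons h5 q => simp at h

private lemma aux_walk6 {V : Type*} {G : SimpleGraph V} {x : V} (p : G.Walk x x)
    (h : p.length = 6) :
    ∃ b c d e g, G.Adj x b ∧ G.Adj b c ∧ G.Adj c d ∧ G.Adj d e ∧ G.Adj e g ∧ G.Adj g x ∧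
      p.support = [x, b, c, d, e, g, x] := by
  cases p with
  | nil => simp at h
  | cons h1 q => cases q with
    | nil => simp at h
    | cons h2 q => cases q with
      | nil => simp at h
      | cons h3 q => cases q with
        | nil => simp at h
        | cons h4 q => cases q with
          | nil => simp at h
          | cons h5 q => cases q with
            | nil => simp at h
            | cons h6 q => cases q with
              | nil => exact ⟨_, _, _, _, _, h1, h2, h3, h4, h5, h6, by simp⟩
              | cons h7 q => simp at h

private lemma aux_end_mem_tail {V : Type*} {G : SimpleGraph V} {x : V} (p : G.Walk x x)
    (h : p ≠ Walk.nil) : x ∈ p.support.tail := by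
  cases p with
  | nil => exact absurd rfl h
  | cons h1 q => simp

set_option maxHeartbeats 1000000 in
private lemma aux_parity (A B C D E Fp : Prop)
    [Decidable A] [Decidable B] [Decidable C] [Decidable D] [Decidable E] [Decidable Fp]
    (Rx : A → Fp ∨ B) (Rb : B → A ∨ C) (Rc : C → B ∨ D)
    (Rd : D → C ∨ E) (Re : E → D ∨ Fp) (Rf : Fp → E ∨ A)
    (Rx' : ¬A → ¬Fp ∨ ¬B) (Rb' : ¬B → ¬A ∨ ¬C) (Rc' : ¬C → ¬B ∨ ¬D)
    (Rd' : ¬D → ¬C ∨ ¬E) (Re' : ¬E → ¬D ∨ ¬Fp) (Rf' : ¬Fp → ¬E ∨ ¬A)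
    (hn : (if B then 1 else 0) + ((if C then 1 else 0) + ((if D then 1 else 0) +
      ((if E then 1 else 0) + ((if Fp then 1 else 0) + ((if A then 1 else 0) + 0))))) = 1 ∨
      (if B then 1 else 0) + ((if C then 1 else 0) + ((if D then 1 else 0) +
      ((if E then 1 else 0) + ((if Fp then 1 else 0) + ((if A then 1 else 0) + 0))))) = 5) :
    False := by
  by_cases hA : A <;> by_cases hB : B <;> by_cases hC : C <;>
    by_cases hD : D <;> by_cases hE : E <;> by_cases hF : Fp <;>
    simp only [hA, hB, hC, hD, hE, hF, if_true, if_false] at hn <;>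
    first
      | omega
      | exact (Rx hA).elim hF hB
      | exact (Rb hB).elim hA hC
      | exact (Rc hC).elim hB hD
      | exact (Rd hD).elim hC hE
      | exact (Re hE).elim hD hF
      | exact (Rf hF).elim hE hA
      | exact (Rx' hA).elim (· hF) (· hB)
      | exact (Rb' hB).elim (· hA) (· hC)
      | exact (Rc' hC).elim (· hB) (· hD)
      | exact (Rd' hD).elim (· hC) (· hE)
      | exact (Re' hE).elim (· hD) (· hF)
      | exact (Rf' hF).elim (· hE) (· hA)


set_option maxHeartbeats 1600000 in
/-- In the extremal construction (even k ≥ 2), G contains no spanning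
collection of k vertex-disjoint cycles of which k − 1 have length 4 and one has
length 6. -/
theorem extremal_construction_no_spanning_cycles {V : Type*} [Fintype V] [DecidableEq V]
    (G : SimpleGraph V) [DecidableRel G.Adj]
    (k : ℕ) (hk : 2 ≤ k) (hke : Even k)
    (X₁ X₂ Y₁ Y₂ : Finset V) (u v : V)
    (hX₁ : X₁.card = k) (hX₂ : X₂.card = k) (hY₁ : Y₁.card = k) (hY₂ : Y₂.card = k)
    (hd₁ : Disjoint X₁ X₂) (hd₂ : Disjoint X₁ Y₁) (hd₃ : Disjoint X₁ Y₂)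
    (hd₄ : Disjoint X₂ Y₁) (hd₅ : Disjoint X₂ Y₂) (hd₆ : Disjoint Y₁ Y₂)
    (huv : u ≠ v)
    (hu : u ∉ X₁ ∪ X₂ ∪ Y₁ ∪ Y₂) (hv : v ∉ X₁ ∪ X₂ ∪ Y₁ ∪ Y₂)
    (hunion : X₁ ∪ X₂ ∪ Y₁ ∪ Y₂ ∪ {u, v} = Finset.univ)
    (f : V → V) (hf₁ : ∀ x ∈ X₁, f x ∈ Y₂) (hf₂ : Set.InjOn f ↑X₁)
    (hf₃ : Y₂ = X₁.image f)
    (hadj : ∀ a b, G.Adj a b ↔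
      (a ∈ X₁ ∧ b ∈ Y₁) ∨ (b ∈ X₁ ∧ a ∈ Y₁) ∨
      (a ∈ X₂ ∧ b ∈ Y₂) ∨ (b ∈ X₂ ∧ a ∈ Y₂) ∨
      (a ∈ X₁ ∧ b = f a) ∨ (b ∈ X₁ ∧ a = f b) ∨
      (a = u ∧ (b ∈ Y₁ ∨ b = v)) ∨ (b = u ∧ (a ∈ Y₁ ∨ a = v)) ∨
      (a = v ∧ b ∈ X₂) ∨ (b = v ∧ a ∈ X₂)) :
    ¬ ∃ (g : Fin k → V) (c : ∀ i, G.Walk (g i) (g i)),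
        (∀ i, (c i).IsCycle) ∧
        (∀ i j, i ≠ j → ∀ w, w ∈ (c i).support → w ∉ (c j).support) ∧
        (∀ w : V, ∃ i, w ∈ (c i).support) ∧
        (∃ i₀, (c i₀).length = 6 ∧ ∀ i, i ≠ i₀ → (c i).length = 4) := by
  rintro ⟨g, c, hcyc, hdisjsup, hcov, i₀, hi₀, hlen4⟩
  -- basic membership facts
  simp only [Finset.mem_union, not_or] at hu hv
  obtain ⟨⟨⟨hu1, hu2⟩, hu3⟩, hu4⟩ := hu
  obtain ⟨⟨⟨hv1, hv2⟩, hv3⟩, hv4⟩ := hv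
  have hD₁ : ∀ {a}, a ∈ X₁ → a ∉ X₂ := fun h => Finset.disjoint_left.mp hd₁ h
  have hD₂ : ∀ {a}, a ∈ X₁ → a ∉ Y₁ := fun h => Finset.disjoint_left.mp hd₂ h
  have hD₃ : ∀ {a}, a ∈ X₁ → a ∉ Y₂ := fun h => Finset.disjoint_left.mp hd₃ h
  have hD₄ : ∀ {a}, a ∈ X₂ → a ∉ Y₁ := fun h => Finset.disjoint_left.mp hd₄ h
  have hD₅ : ∀ {a}, a ∈ X₂ → a ∉ Y₂ := fun h => Finset.disjoint_left.mp hd₅ h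
  have hD₆ : ∀ {a}, a ∈ Y₁ → a ∉ Y₂ := fun h => Finset.disjoint_left.mp hd₆ h
  -- neighbour characterisations
  have nbrX₁ : ∀ a b, a ∈ X₁ → G.Adj a b → b ∈ Y₁ ∨ b = f a := by
    intro a b ha hab
    rcases (hadj a b).1 hab with ⟨_, h⟩ | ⟨_, h⟩ | ⟨h, _⟩ | ⟨_, h⟩ | ⟨_, h⟩ | ⟨h1, h2⟩ |
      ⟨h, _⟩ | ⟨_, h⟩ | ⟨h, _⟩ | ⟨_, h⟩
    · exact Or.inl h
    · exact absurd h (hD₂ ha)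
    · exact absurd h (hD₁ ha)
    · exact absurd h (hD₃ ha)
    · exact Or.inr h
    · exact absurd (h2 ▸ hf₁ b h1) (hD₃ ha)
    · exact absurd (h ▸ ha) hu1
    · rcases h with h | h
      · exact absurd h (hD₂ ha)
      · exact absurd (h ▸ ha) hv1
    · exact absurd (h ▸ ha) hv1
    · exact absurd h (hD₁ ha)
  have nbrY₁ : ∀ a b, a ∈ Y₁ → G.Adj a b → b ∈ X₁ ∨ b = u := by
    intro a b ha hab
    rcases (hadj a b).1 hab with ⟨h, _⟩ | ⟨h1, _⟩ | ⟨h, _⟩ | ⟨_, h⟩ | ⟨h, _⟩ | ⟨h1, _⟩ |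
      ⟨h, _⟩ | ⟨h, _⟩ | ⟨h, _⟩ | ⟨_, h⟩
    · exact absurd ha (hD₂ h)
    · exact Or.inl h1
    · exact absurd ha (hD₄ h)
    · exact absurd h (hD₆ ha)
    · exact absurd ha (hD₂ h)
    · exact Or.inl h1
    · exact absurd (h ▸ ha) hu3
    · exact Or.inr h
    · exact absurd (h ▸ ha) hv3
    · exact absurd ha (hD₄ h)
  have nbrX₂ : ∀ a b, a ∈ X₂ → G.Adj a b → b ∈ Y₂ ∨ b = v := by
    intro a b ha hab
    rcases (hadj a b).1 hab with ⟨h, _⟩ | ⟨_, h⟩ | ⟨_, h⟩ | ⟨_, h⟩ | ⟨h, _⟩ | ⟨h1, h2⟩ |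
      ⟨h, _⟩ | ⟨_, h⟩ | ⟨h, _⟩ | ⟨h, _⟩
    · exact absurd ha (hD₁ h)
    · exact absurd h (hD₄ ha)
    · exact Or.inl h
    · exact absurd h (hD₅ ha)
    · exact absurd ha (hD₁ h)
    · exact absurd (h2 ▸ hf₁ b h1) (hD₅ ha)
    · exact absurd (h ▸ ha) hu2
    · rcases h with h | h
      · exact absurd h (hD₄ ha)
      · exact absurd (h ▸ ha) hv2
    · exact absurd (h ▸ ha) hv2
    · exact Or.inr h
  have nbrY₂ : ∀ a b, a ∈ Y₂ → G.Adj a b → b ∈ X₂ ∨ (b ∈ X₁ ∧ f b = a) := by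
    intro a b ha hab
    rcases (hadj a b).1 hab with ⟨h, _⟩ | ⟨_, h⟩ | ⟨h, _⟩ | ⟨h1, _⟩ | ⟨h, _⟩ | ⟨h1, h2⟩ |
      ⟨h, _⟩ | ⟨_, h⟩ | ⟨h, _⟩ | ⟨_, h⟩
    · exact absurd ha (hD₃ h)
    · exact absurd ha (hD₆ h)
    · exact absurd ha (hD₅ h)
    · exact Or.inl h1
    · exact absurd ha (hD₃ h)
    · exact Or.inr ⟨h1, h2.symm⟩
    · exact absurd (h ▸ ha) hu4
    · rcases h with h | h
      · exact absurd ha (hD₆ h)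
      · exact absurd (h ▸ ha) hv4
    · exact absurd (h ▸ ha) hv4
    · exact absurd ha (hD₅ h)
  have nbru : ∀ b, G.Adj u b → b ∈ Y₁ ∨ b = v := by
    intro b hab
    rcases (hadj u b).1 hab with ⟨h, _⟩ | ⟨_, h⟩ | ⟨h, _⟩ | ⟨_, h⟩ | ⟨h, _⟩ | ⟨h1, h2⟩ |
      ⟨_, h⟩ | ⟨_, h⟩ | ⟨h, _⟩ | ⟨_, h⟩
    · exact absurd h hu1
    · exact absurd h hu3
    · exact absurd h hu2
    · exact absurd h hu4
    · exact absurd h hu1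
    · exact absurd (h2 ▸ hf₁ b h1) hu4
    · exact h
    · rcases h with h | h
      · exact absurd h hu3
      · exact absurd h huv
    · exact absurd h huv
    · exact absurd h hu2
  have nbrv : ∀ b, G.Adj v b → b ∈ X₂ ∨ b = u := by
    intro b hab
    rcases (hadj v b).1 hab with ⟨h, _⟩ | ⟨_, h⟩ | ⟨h, _⟩ | ⟨_, h⟩ | ⟨h, _⟩ | ⟨h1, h2⟩ |
      ⟨h, _⟩ | ⟨h, _⟩ | ⟨_, h⟩ | ⟨_, h⟩
    · exact absurd h hv1
    · exact absurd h hv3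
    · exact absurd h hv2
    · exact absurd h hv4
    · exact absurd h hv1
    · exact absurd (h2 ▸ hf₁ b h1) hv4
    · exact absurd h.symm huv
    · exact Or.inr h
    · exact Or.inl h
    · exact absurd h hv2
  -- the cut
  set P₁ : Finset V := X₁ ∪ Y₁ ∪ {u} with hP₁def
  have memP₁ : ∀ x, x ∈ P₁ ↔ (x ∈ X₁ ∨ x ∈ Y₁ ∨ x = u) := by
    intro x; simp [hP₁def, Finset.mem_union, or_assoc]; tauto
  have cross : ∀ a b, G.Adj a b → a ∈ P₁ → b ∉ P₁ →
      (a ∈ X₁ ∧ b = f a) ∨ (a = u ∧ b = v) := by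
    intro a b hab ha hb
    rcases (memP₁ a).1 ha with h | h | h
    · rcases nbrX₁ a b h hab with h' | h'
      · exact absurd ((memP₁ b).2 (Or.inr (Or.inl h'))) hb
      · exact Or.inl ⟨h, h'⟩
    · rcases nbrY₁ a b h hab with h' | h'
      · exact absurd ((memP₁ b).2 (Or.inl h')) hb
      · exact absurd ((memP₁ b).2 (Or.inr (Or.inr h'))) hb
    · subst h
      rcases nbru b hab with h' | h'
      · exact absurd ((memP₁ b).2 (Or.inr (Or.inl h'))) hb
      · exact Or.inr ⟨rfl, h'⟩
  have uniq₁ : ∀ p q r, p ∈ P₁ → q ∉ P₁ → r ∉ P₁ → G.Adj p q → G.Adj p r → q = r := by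
    intro p q r hp hq hr hpq hpr
    rcases cross p q hpq hp hq with ⟨h1, h2⟩ | ⟨h1, h2⟩ <;>
      rcases cross p r hpr hp hr with ⟨h3, h4⟩ | ⟨h3, h4⟩
    · rw [h2, h4]
    · exact absurd (h3 ▸ h1) hu1
    · exact absurd (h1 ▸ h3) hu1
    · rw [h2, h4]
  have uniq₂ : ∀ p q r, p ∉ P₁ → q ∈ P₁ → r ∈ P₁ → G.Adj p q → G.Adj p r → q = r := by
    intro p q r hp hq hr hpq hpr
    rcases cross q p hpq.symm hq hp with ⟨h1, h2⟩ | ⟨h1, h2⟩ <;>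
      rcases cross r p hpr.symm hr hp with ⟨h3, h4⟩ | ⟨h3, h4⟩
    · exact hf₂ h1 h3 (h2 ▸ h4)
    · exact absurd (h4 ▸ h2 ▸ hf₁ q h1) hv4
    · exact absurd (h2 ▸ h4 ▸ hf₁ r h3) hv4
    · rw [h1, h3]
  -- no 4-cycle crosses the cut
  have cross4 : ∀ a b c' d, G.Adj a b → G.Adj b c' → G.Adj c' d → G.Adj d a →
      a ≠ c' → b ≠ d → a ∈ P₁ → b ∉ P₁ → False := by
    intro a b c' d hab hbc hcd hda hac hbd ha hb
    rcases cross a b hab ha hb with ⟨h1, h2⟩ | ⟨h1, h2⟩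
    · have hbY₂ : b ∈ Y₂ := h2 ▸ hf₁ a h1
      rcases nbrY₂ b c' hbY₂ hbc with hc' | ⟨hc', hfc'⟩
      · rcases nbrX₂ c' d hc' hcd with hdY₂ | hdv
        · rcases nbrX₁ a d h1 hda.symm with h' | h'
          · exact hD₆ h' hdY₂
          · exact hbd (h2 ▸ h'.symm)
        · rcases nbrX₁ a d h1 hda.symm with h' | h'
          · exact hv3 (hdv ▸ h')
          · exact hv4 (hdv ▸ h' ▸ h2 ▸ hbY₂)
      · exact hac (hf₂ h1 hc' (h2.symm.trans hfc'.symm))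
    · subst h1; subst h2
      rcases nbrv c' hbc with hc' | hc'
      · rcases nbrX₂ c' d hc' hcd with hdY₂ | hdv
        · rcases nbru d hda.symm with h' | h'
          · exact hD₆ h' hdY₂
          · exact hv4 (h' ▸ hdY₂)
        · exact hbd hdv.symm
      · exact hac hc'.symm
  have quad : ∀ a b c' d, G.Adj a b → G.Adj b c' → G.Adj c' d → G.Adj d a →
      a ≠ c' → b ≠ d →
      ((a ∈ P₁ ∧ b ∈ P₁ ∧ c' ∈ P₁ ∧ d ∈ P₁) ∨ (a ∉ P₁ ∧ b ∉ P₁ ∧ c' ∉ P₁ ∧ d ∉ P₁)) := by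
    intro a b c' d hab hbc hcd hda hac hbd
    by_cases ha : a ∈ P₁ <;> by_cases hb : b ∈ P₁ <;> by_cases hc : c' ∈ P₁ <;>
      by_cases hd : d ∈ P₁ <;>
      first
        | exact Or.inl ⟨ha, hb, hc, hd⟩
        | exact Or.inr ⟨ha, hb, hc, hd⟩
        | exact (cross4 a b c' d hab hbc hcd hda hac hbd ha hb).elim
        | exact (cross4 b c' d a hbc hcd hda hab hbd hac.symm hb hc).elim
        | exact (cross4 c' d a b hcd hda hab hbc hac.symm hbd.symm hc hd).elim
        | exact (cross4 d a b c' hda hab hbc hcd hbd.symm hac hd ha).elim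
  -- counting
  set F : Fin k → ℕ := fun i => ((c i).support.tail.toFinset ∩ P₁).card with hFdef
  have hsum : ∑ i, F i = P₁.card := by
    rw [← Finset.card_biUnion]
    · congr 1
      ext w
      simp only [Finset.mem_biUnion, Finset.mem_univ, true_and, Finset.mem_inter,
        List.mem_toFinset]
      constructor
      · rintro ⟨i, hw⟩; exact hw.2
      · intro hw
        obtain ⟨i, hi⟩ := hcov w
        refine ⟨i, ?_, hw⟩
        rw [Walk.support_eq_cons] at hi
        rcases List.mem_cons.mp hi with h | h
        · exact h ▸ aux_end_mem_tail (c i) (hcyc i).ne_nil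
        · exact h
    · intro i _ j _ hij
      rw [Function.onFun, Finset.disjoint_left]
      intro w hw hw'
      simp only [Finset.mem_inter, List.mem_toFinset] at hw hw'
      exact hdisjsup i j hij w (List.mem_of_mem_tail hw.1) (List.mem_of_mem_tail hw'.1)
  have hP₁card : P₁.card = 2 * k + 1 := by
    rw [hP₁def, Finset.card_union_of_disjoint, Finset.card_union_of_disjoint hd₂,
      hX₁, hY₁, Finset.card_singleton]
    · ring
    · simp [Finset.disjoint_singleton_right, hu1, hu3]
  have h04 : ∀ i, i ≠ i₀ → F i = 0 ∨ F i = 4 := by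
    intro i hi
    obtain ⟨b, c2, d2, h1, h2, h3, h4, hsupp⟩ := aux_walk4 (c i) (hlen4 i hi)
    have hnd0 := (hcyc i).support_nodup
    rw [hsupp] at hnd0
    have hnd : ([b, c2, d2, g i] : List V).Nodup := hnd0
    have hdst := hnd
    simp only [List.nodup_cons, List.mem_cons, List.mem_singleton, not_or,
      List.nodup_nil, and_true, List.not_mem_nil, not_false_iff] at hdst
    obtain ⟨⟨hbc2, hbd2, hbx⟩, ⟨hc2d2, hc2x⟩, hd2x⟩ := hdst
    have htf : (c i).support.tail.toFinset = ([b, c2, d2, g i] : List V).toFinset := by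
      rw [hsupp]; rfl
    rcases quad (g i) b c2 d2 h1 h2 h3 h4 (fun h => hc2x h.symm) hbd2 with
      ⟨hA, hB, hC, hD⟩ | ⟨hA, hB, hC, hD⟩
    · right
      show ((c i).support.tail.toFinset ∩ P₁).card = 4
      have hsub : ([b, c2, d2, g i] : List V).toFinset ⊆ P₁ := by
        intro w hw
        simp only [List.mem_toFinset, List.mem_cons, List.mem_singleton,
          List.not_mem_nil, or_false] at hw
        rcases hw with rfl | rfl | rfl | rfl
        exacts [hB, hC, hD, hA]
      rw [htf, Finset.inter_eq_left.mpr hsub, List.toFinset_card_of_nodup hnd]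
      rfl
    · left
      show ((c i).support.tail.toFinset ∩ P₁).card = 0
      rw [htf]
      convert Finset.card_empty
      apply Finset.eq_empty_of_forall_notMem
      intro w hw
      simp only [Finset.mem_inter, List.mem_toFinset, List.mem_cons, List.mem_singleton,
        List.not_mem_nil, or_false] at hw
      rcases hw with ⟨rfl | rfl | rfl | rfl, hwP⟩
      exacts [hB hwP, hC hwP, hD hwP, hA hwP]
  have hdvd : (4 : ℕ) ∣ ∑ i ∈ Finset.univ.erase i₀, F i := by
    apply Finset.dvd_sum
    intro i hi
    rcases h04 i (Finset.ne_of_mem_erase hi) with h | h <;> simp [h]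
  obtain ⟨m, hm⟩ := hdvd
  have hkey : F i₀ + 4 * m = 2 * k + 1 := by
    rw [← hm, Finset.add_sum_erase _ F (Finset.mem_univ i₀), hsum, hP₁card]
  -- the 6-cycle
  obtain ⟨b, c2, d2, e2, f2, h1, h2, h3, h4, h5, h6, hsupp⟩ := aux_walk6 (c i₀) hi₀
  have hnd0 := (hcyc i₀).support_nodup
  rw [hsupp] at hnd0
  have hnd : ([b, c2, d2, e2, f2, g i₀] : List V).Nodup := hnd0
  have hdst := hnd
  simp only [List.nodup_cons, List.mem_cons, List.mem_singleton, not_or,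
    List.nodup_nil, and_true, List.not_mem_nil, not_false_iff] at hdst
  obtain ⟨⟨hbc2, hbd2, hbe2, hbf2, hbx⟩, ⟨hc2d2, hc2e2, hc2f2, hc2x⟩,
    ⟨hd2e2, hd2f2, hd2x⟩, ⟨he2f2, he2x⟩, hf2x⟩ := hdst
  -- F i₀ as a sum of indicators
  have hFi₀ : F i₀ = (if b ∈ P₁ then 1 else 0) + ((if c2 ∈ P₁ then 1 else 0) +
      ((if d2 ∈ P₁ then 1 else 0) + ((if e2 ∈ P₁ then 1 else 0) +
      ((if f2 ∈ P₁ then 1 else 0) + ((if g i₀ ∈ P₁ then 1 else 0) + 0))))) := by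
    show ((c i₀).support.tail.toFinset ∩ P₁).card = _
    rw [hsupp]
    show (([b, c2, d2, e2, f2, g i₀] : List V).toFinset ∩ P₁).card = _
    rw [← Finset.filter_mem_eq_inter, Finset.card_filter,
      List.sum_toFinset _ hnd]
    simp [List.map, List.sum_cons]
  have hn : F i₀ = 1 ∨ F i₀ = 5 := by
    have hle : F i₀ ≤ 6 := by
      rw [hFi₀]
      split_ifs <;> omega
    obtain ⟨s', hs'⟩ := hke
    omega
  -- the twelve local rules
  have Rx : g i₀ ∈ P₁ → f2 ∈ P₁ ∨ b ∈ P₁ := by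
    intro h; by_contra hcon; push_neg at hcon
    exact hbf2 (uniq₁ (g i₀) f2 b h hcon.1 hcon.2 h6.symm h1).symm
  have Rb : b ∈ P₁ → g i₀ ∈ P₁ ∨ c2 ∈ P₁ := by
    intro h; by_contra hcon; push_neg at hcon
    exact hc2x (uniq₁ b (g i₀) c2 h hcon.1 hcon.2 h1.symm h2).symm
  have Rc : c2 ∈ P₁ → b ∈ P₁ ∨ d2 ∈ P₁ := by
    intro h; by_contra hcon; push_neg at hcon
    exact hbd2 (uniq₁ c2 b d2 h hcon.1 hcon.2 h2.symm h3)
  have Rd : d2 ∈ P₁ → c2 ∈ P₁ ∨ e2 ∈ P₁ := by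
    intro h; by_contra hcon; push_neg at hcon
    exact hc2e2 (uniq₁ d2 c2 e2 h hcon.1 hcon.2 h3.symm h4)
  have Re : e2 ∈ P₁ → d2 ∈ P₁ ∨ f2 ∈ P₁ := by
    intro h; by_contra hcon; push_neg at hcon
    exact hd2f2 (uniq₁ e2 d2 f2 h hcon.1 hcon.2 h4.symm h5)
  have Rf : f2 ∈ P₁ → e2 ∈ P₁ ∨ g i₀ ∈ P₁ := by
    intro h; by_contra hcon; push_neg at hcon
    exact he2x (uniq₁ f2 e2 (g i₀) h hcon.1 hcon.2 h5.symm h6)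
  have Rx' : g i₀ ∉ P₁ → f2 ∉ P₁ ∨ b ∉ P₁ := by
    intro h; by_contra hcon; push_neg at hcon
    exact hbf2 (uniq₂ (g i₀) f2 b h hcon.1 hcon.2 h6.symm h1).symm
  have Rb' : b ∉ P₁ → g i₀ ∉ P₁ ∨ c2 ∉ P₁ := by
    intro h; by_contra hcon; push_neg at hcon
    exact hc2x (uniq₂ b (g i₀) c2 h hcon.1 hcon.2 h1.symm h2).symm
  have Rc' : c2 ∉ P₁ → b ∉ P₁ ∨ d2 ∉ P₁ := by
    intro h; by_contra hcon; push_neg at hcon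
    exact hbd2 (uniq₂ c2 b d2 h hcon.1 hcon.2 h2.symm h3)
  have Rd' : d2 ∉ P₁ → c2 ∉ P₁ ∨ e2 ∉ P₁ := by
    intro h; by_contra hcon; push_neg at hcon
    exact hc2e2 (uniq₂ d2 c2 e2 h hcon.1 hcon.2 h3.symm h4)
  have Re' : e2 ∉ P₁ → d2 ∉ P₁ ∨ f2 ∉ P₁ := by
    intro h; by_contra hcon; push_neg at hcon
    exact hd2f2 (uniq₂ e2 d2 f2 h hcon.1 hcon.2 h4.symm h5)
  have Rf' : f2 ∉ P₁ → e2 ∉ P₁ ∨ g i₀ ∉ P₁ := by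
    intro h; by_contra hcon; push_neg at hcon
    exact he2x (uniq₂ f2 e2 (g i₀) h hcon.1 hcon.2 h5.symm h6)
  rw [hFi₀] at hn
  exact aux_parity _ _ _ _ _ _ Rx Rb Rc Rd Re Rf Rx' Rb' Rc' Rd' Re' Rf' hn
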